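/- R(G) equals the connected component containing 0 of the set {x ∈ [0,1]^V : 𝕶_G(x) > 0}, with the subspace topology from ℝ^V. (Proposition 4.4.) -/

import Mathlib

open scoped Classical ENNReal

set_option linter.unusedSectionVars false

variable {V : Type*} [Fintype V] [DecidableEq V]

/-- An admissible swap exchanges two consecutive letters that are adjacent in `G`. -/
def AdjSwap (G : SimpleGraph V) (w w' : List V) : Prop :=
  ∃ (a b : List V) (u v : V), G.Adj u v ∧ w = a ++ u :: v :: b ∧ w' = a ++ v :: u :: b

/-- Two words are equivalent if one can be transformed into the other by finitely many
admissible swaps. -/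
def WordEquiv (G : SimpleGraph V) : List V → List V → Prop :=
  Relation.ReflTransGen (AdjSwap G)

lemma adjSwap_symm (G : SimpleGraph V) : Symmetric (AdjSwap G) := by
  rintro w w' ⟨a, b, u, v, h, rfl, rfl⟩
  exact ⟨a, b, v, u, h.symm, rfl, rfl⟩

/-- The setoid of words modulo admissible swaps. -/
def wordSetoid (G : SimpleGraph V) : Setoid (List V) where
  r := WordEquiv G
  iseqv := ⟨fun _ => Relation.ReflTransGen.refl,
    fun h => by
      change Relation.ReflTransGen (AdjSwap G) _ _ at h ⊢
      induction h with
      | refl => exact Relation.ReflTransGen.refl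
      | tail _ hs ih => exact Relation.ReflTransGen.head (adjSwap_symm G hs) ih,
    fun h h' => Relation.ReflTransGen.trans h h'⟩

/-- A word is `G`-reduced if between any two equal letters there is a letter distinct from
them and not adjacent to them. -/
def IsGReduced (G : SimpleGraph V) (w : List V) : Prop :=
  ∀ i j : Fin w.length, i < j → w.get i = w.get j →
    ∃ k : Fin w.length, i < k ∧ k < j ∧ w.get k ≠ w.get i ∧ ¬ G.Adj (w.get k) (w.get i)

/-- The product `x_{w_1} ⋯ x_{w_ℓ}` depends only on the equivalence class of a word. -/
noncomputable def classProd (G : SimpleGraph V) (x : V → ℝ≥0∞) :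
    Quotient (wordSetoid G) → ℝ≥0∞ :=
  Quotient.lift (fun w : List V => (w.map x).prod) (by
    intro a b h
    induction h with
    | refl => rfl
    | tail _ hs ih =>
        obtain ⟨a', b', u, v, huv, rfl, rfl⟩ := hs
        rw [ih]
        simp only [List.map_append, List.prod_append, List.map_cons, List.prod_cons]
        ring)

/-- `tildeF G x` : the sum over all equivalence classes of words of `∏ x_{w_i}`,
valued in `[0,∞]`. -/
noncomputable def tildeF (G : SimpleGraph V) (x : V → ℝ) : ℝ≥0∞ :=
  ∑' c : Quotient (wordSetoid G), classProd G (fun v => ENNReal.ofReal (x v)) c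

/-- `redF G x` : the sum over all equivalence classes of `G`-reduced words of `∏ x_{w_i}`,
valued in `[0,∞]`. -/
noncomputable def redF (G : SimpleGraph V) (x : V → ℝ) : ℝ≥0∞ :=
  ∑' c : {c : Quotient (wordSetoid G) // ∃ w, IsGReduced G w ∧ Quotient.mk (wordSetoid G) w = c},
    classProd G (fun v => ENNReal.ofReal (x v)) c.1

/-- The clique polynomial `𝕶_{G,V'}(x) = ∑_{cliques K ⊆ V'} (-1)^{|K|} ∏_{v ∈ K} x_v`. -/
noncomputable def cliquePoly (G : SimpleGraph V) (V' : Finset V) (x : V → ℝ) : ℝ :=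
  ∑ K ∈ V'.powerset.filter (fun K : Finset V => G.IsClique (K : Set V)),
    (-1 : ℝ) ^ K.card * ∏ v ∈ K, x v

/-- The Euclidean norm on `ℝ^V`. -/
noncomputable def eucNorm (x : V → ℝ) : ℝ := Real.sqrt (∑ v, x v ^ 2)

/-- `min_{V' ⊆ V} 𝕶_{G,V'}(x)`. -/
noncomputable def minK (G : SimpleGraph V) (x : V → ℝ) : ℝ :=
  Finset.univ.inf' ⟨∅, Finset.mem_univ _⟩ fun V' : Finset V => cliquePoly G V' x

/-- `ρ(u) = inf {r ∈ [0,∞) : min_{V' ⊆ V} 𝕶_{G,V'}(r·u) = 0}`. -/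
noncomputable def rho (G : SimpleGraph V) (u : V → ℝ) : ℝ :=
  sInf {r : ℝ | 0 ≤ r ∧ minK G (r • u) = 0}

/-- The region `R(G) = {x ∈ [0,1]^V : 𝕶_{G,V'}(x) > 0 for all V' ⊆ V}`. -/
def regionR (G : SimpleGraph V) : Set (V → ℝ) :=
  {x | (∀ v, x v ∈ Set.Icc (0 : ℝ) 1) ∧ ∀ V' : Finset V, 0 < cliquePoly G V' x}


lemma cliquePoly_erase (G : SimpleGraph V) (V' : Finset V) (x : V → ℝ) {v : V} (hv : v ∈ V') :
    cliquePoly G V' x = cliquePoly G (V'.erase v) x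
      - x v * cliquePoly G ((V'.erase v) ∩ G.neighborFinset v) x := by
  unfold cliquePoly
  rw [← Finset.sum_filter_add_sum_filter_not
    (Finset.filter (fun K : Finset V => G.IsClique (K : Set V)) V'.powerset) (fun K => v ∈ K)]
  have h1 : Finset.filter (fun K => ¬ v ∈ K)
      (Finset.filter (fun K : Finset V => G.IsClique (K : Set V)) V'.powerset)
      = Finset.filter (fun K : Finset V => G.IsClique (K : Set V)) (V'.erase v).powerset := by
    ext K
    simp only [Finset.mem_filter, Finset.mem_powerset, Finset.subset_erase]
    tauto
  have h2 : ∑ K ∈ Finset.filter (fun K => v ∈ K)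
      (Finset.filter (fun K : Finset V => G.IsClique (K : Set V)) V'.powerset),
      (-1 : ℝ) ^ K.card * ∏ u ∈ K, x u
      = ∑ K ∈ Finset.filter (fun K : Finset V => G.IsClique (K : Set V))
          ((V'.erase v) ∩ G.neighborFinset v).powerset,
        (-(x v * ((-1 : ℝ) ^ K.card * ∏ u ∈ K, x u))) := by
    refine Finset.sum_nbij' (fun K => K.erase v) (fun K => insert v K) ?_ ?_ ?_ ?_ ?_
    · intro K hK
      simp only [Finset.mem_filter, Finset.mem_powerset] at hK ⊢
      obtain ⟨⟨hKV, hKc⟩, hvK⟩ := hK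
      refine ⟨Finset.subset_inter (Finset.erase_subset_erase v hKV) ?_, hKc.subset (by simp [Finset.erase_subset])⟩
      intro u hu
      rw [Finset.mem_erase] at hu
      rw [SimpleGraph.mem_neighborFinset]
      exact (hKc (by exact_mod_cast hvK) (by exact_mod_cast hu.2) (Ne.symm hu.1))
    · intro K hK
      simp only [Finset.mem_filter, Finset.mem_powerset, Finset.subset_inter_iff] at hK ⊢
      obtain ⟨⟨hK1, hK2⟩, hKc⟩ := hK
      refine ⟨⟨Finset.insert_subset hv (hK1.trans (Finset.erase_subset v V')), ?_⟩, Finset.mem_insert_self v K⟩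
      rw [Finset.coe_insert]
      refine hKc.insert ?_
      intro b hb _
      have := hK2 (by exact_mod_cast hb)
      rw [SimpleGraph.mem_neighborFinset] at this
      exact this
    · intro K hK
      simp only [Finset.mem_filter] at hK
      exact Finset.insert_erase hK.2
    · intro K hK
      simp only [Finset.mem_filter, Finset.mem_powerset, Finset.subset_inter_iff] at hK
      refine Finset.erase_insert ?_
      intro hvK
      have := hK.1.2 hvK
      rw [SimpleGraph.mem_neighborFinset] at this
      exact G.irrefl this
    · intro K hK
      simp only [Finset.mem_filter] at hK
      have hvK := hK.2
      have hc : K.card = (K.erase v).card + 1 := (Finset.card_erase_add_one hvK).symm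
      have hp : ∏ u ∈ K, x u = x v * ∏ u ∈ K.erase v, x u := (Finset.mul_prod_erase K x hvK).symm
      rw [hc, hp]; ring
  rw [h1, h2]
  rw [Finset.sum_neg_distrib, ← Finset.mul_sum]
  ring

lemma cliquePoly_congr' (G : SimpleGraph V) (W : Finset V) {x y : V → ℝ}
    (h : ∀ u ∈ W, x u = y u) : cliquePoly G W x = cliquePoly G W y := by
  unfold cliquePoly
  refine Finset.sum_congr rfl fun K hK => ?_
  have hKW : K ⊆ W := Finset.mem_powerset.1 (Finset.mem_filter.1 hK).1
  rw [Finset.prod_congr rfl fun u hu => h u (hKW hu)]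

lemma cliquePoly_zero' (G : SimpleGraph V) (W : Finset V) :
    cliquePoly G W (fun _ => (0:ℝ)) = 1 := by
  unfold cliquePoly
  rw [Finset.sum_eq_single ∅]
  · simp
  · intro K hK hKne
    obtain ⟨w, hw⟩ := Finset.nonempty_iff_ne_empty.2 hKne
    simp [Finset.prod_eq_zero hw]
  · intro h
    exact absurd (Finset.mem_filter.2 ⟨Finset.mem_powerset.2 (Finset.empty_subset W), by simp⟩) h

lemma cliquePoly_anti (G : SimpleGraph V) {x : V → ℝ} (hx : ∀ v, 0 ≤ x v)
    (h : ∀ W : Finset V, 0 ≤ cliquePoly G W x) :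
    ∀ W' W : Finset V, W ⊆ W' → cliquePoly G W' x ≤ cliquePoly G W x := by
  intro W'
  induction W' using Finset.strongInduction with
  | _ W' ih =>
    intro W hWW
    rcases hWW.eq_or_ssubset with rfl | hss
    · exact le_refl _
    · obtain ⟨v, hvW', hvW⟩ := Finset.exists_of_ssubset hss
      have h1 := cliquePoly_erase G W' x hvW'
      have h2 : cliquePoly G W' x ≤ cliquePoly G (W'.erase v) x := by
        rw [h1]
        nlinarith [hx v, h ((W'.erase v) ∩ G.neighborFinset v)]
      exact h2.trans (ih (W'.erase v) (Finset.erase_ssubset hvW') W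
        (Finset.subset_erase.2 ⟨hWW, hvW⟩))

lemma regionR_update (G : SimpleGraph V) {x : V → ℝ} (hx : x ∈ regionR G) {u : V} {t : ℝ}
    (ht0 : 0 ≤ t) (ht : t ≤ x u) : Function.update x u t ∈ regionR G := by
  obtain ⟨hbox, hpos⟩ := hx
  constructor
  · intro v
    by_cases hv : v = u
    · subst hv
      simp only [Function.update_self]
      exact ⟨ht0, ht.trans (hbox v).2⟩
    · simpa [Function.update_of_ne hv] using hbox v
  · intro W
    by_cases hu : u ∈ W
    · have hrecy := cliquePoly_erase G W (Function.update x u t) hu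
      have e1 : cliquePoly G (W.erase u) (Function.update x u t) = cliquePoly G (W.erase u) x :=
        cliquePoly_congr' _ _ fun w hw =>
          Function.update_of_ne (Finset.ne_of_mem_erase hw) _ _
      have e2 : cliquePoly G ((W.erase u) ∩ G.neighborFinset u) (Function.update x u t)
          = cliquePoly G ((W.erase u) ∩ G.neighborFinset u) x :=
        cliquePoly_congr' _ _ fun w hw =>
          Function.update_of_ne (Finset.ne_of_mem_erase (Finset.mem_inter.1 hw).1) _ _
      have hrecx := cliquePoly_erase G W x hu
      have hN := hpos ((W.erase u) ∩ G.neighborFinset u)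
      have hW := hpos W
      rw [hrecy, e1, e2, Function.update_self]
      rw [hrecx] at hW
      nlinarith
    · rw [cliquePoly_congr' G W (x := Function.update x u t) (y := x)
        (fun w hw => Function.update_of_ne (by rintro rfl; exact hu hw) _ _)]
      exact hpos W

lemma regionR_downset (G : SimpleGraph V) {x y : V → ℝ} (hx : x ∈ regionR G)
    (h0 : ∀ v, 0 ≤ y v) (hle : ∀ v, y v ≤ x v) : y ∈ regionR G := by
  have key : ∀ s : Finset V, s.piecewise y x ∈ regionR G := by
    intro s
    induction s using Finset.induction with
    | empty => simpa using hx
    | @insert u s hus ih =>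
        rw [Finset.piecewise_insert]
        refine regionR_update G ih (h0 u) ?_
        rw [Finset.piecewise_eq_of_notMem _ _ _ hus]
        exact hle u
  simpa [Finset.piecewise_univ] using key Finset.univ

lemma continuous_cliquePoly (G : SimpleGraph V) (W : Finset V) :
    Continuous fun x : V → ℝ => cliquePoly G W x := by
  unfold cliquePoly
  exact continuous_finset_sum _ fun K _ =>
    continuous_const.mul (continuous_finset_prod _ fun v _ => continuous_apply v)

lemma zero_mem_regionR (G : SimpleGraph V) : (0 : V → ℝ) ∈ regionR G := by
  refine ⟨fun v => by simp, fun W => ?_⟩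
  have : (0 : V → ℝ) = fun _ => (0:ℝ) := rfl
  rw [this, cliquePoly_zero']; norm_num

lemma isPathConnected_regionR (G : SimpleGraph V) : IsPathConnected (regionR G) := by
  have h0R := zero_mem_regionR G
  refine ⟨0, h0R, ?_⟩
  intro y hy
  refine ⟨⟨⟨fun t => (t : ℝ) • y, by continuity⟩, by simp, by simp⟩, fun t => ?_⟩
  refine regionR_downset G hy (fun v => ?_) (fun v => ?_)
  · exact mul_nonneg t.2.1 (hy.1 v).1
  · simpa using mul_le_of_le_one_left (hy.1 v).1 t.2.2

/-- Proposition 4.4: `R(G)` is the connected component of `0` in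
`{x ∈ [0,1]^V : 𝕶_G(x) > 0}`. -/
theorem regionR_eq_connectedComponentIn (G : SimpleGraph V) :
    regionR G = connectedComponentIn
      {x : V → ℝ | (∀ v, x v ∈ Set.Icc (0 : ℝ) 1) ∧ 0 < cliquePoly G Finset.univ x} 0 := by
  set S := {x : V → ℝ | (∀ v, x v ∈ Set.Icc (0 : ℝ) 1) ∧ 0 < cliquePoly G Finset.univ x} with hS
  have h0R := zero_mem_regionR G
  have h0S : (0 : V → ℝ) ∈ S := ⟨h0R.1, h0R.2 Finset.univ⟩
  have hRS : regionR G ⊆ S := fun z hz => ⟨hz.1, hz.2 Finset.univ⟩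
  apply Set.Subset.antisymm
  · exact (isPathConnected_regionR G).isConnected.isPreconnected.subset_connectedComponentIn
      h0R hRS
  · set U := {z : V → ℝ | ∀ W : Finset V, 0 < cliquePoly G W z} with hUdef
    set N := {z : V → ℝ | ∃ W : Finset V, cliquePoly G W z < 0} with hNdef
    have hU : IsOpen U := by
      have : U = ⋂ W : Finset V, {z : V → ℝ | 0 < cliquePoly G W z} := by
        ext z; simp [hUdef]
      rw [this]
      exact isOpen_iInter_of_finite fun W =>
        isOpen_lt continuous_const (continuous_cliquePoly G W)
    have hN : IsOpen N := by
      have : N = ⋃ W : Finset V, {z : V → ℝ | cliquePoly G W z < 0} := by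
        ext z; simp [hNdef]
      rw [this]
      exact isOpen_iUnion fun W => isOpen_lt (continuous_cliquePoly G W) continuous_const
    have hsub : connectedComponentIn S 0 ⊆ U ∪ N := by
      intro z hz
      have hzS : z ∈ S := connectedComponentIn_subset _ _ hz
      by_cases h : ∃ W : Finset V, cliquePoly G W z < 0
      · exact Or.inr h
      · push_neg at h
        refine Or.inl fun W => lt_of_lt_of_le hzS.2 ?_
        exact cliquePoly_anti G (fun v => (hzS.1 v).1) h Finset.univ W (Finset.subset_univ W)
    intro z hz
    have hzS : z ∈ S := connectedComponentIn_subset _ _ hz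
    by_contra hzR
    have hzN : z ∈ N := by
      rcases hsub hz with hU' | hN'
      · exact absurd ⟨hzS.1, hU'⟩ hzR
      · exact hN'
    have h0comp : (0 : V → ℝ) ∈ connectedComponentIn S 0 := mem_connectedComponentIn h0S
    have h0U : (0 : V → ℝ) ∈ U := h0R.2
    obtain ⟨w, hwc, hwU, hwN⟩ :=
      isPreconnected_connectedComponentIn U N hU hN hsub ⟨0, h0comp, h0U⟩ ⟨z, hz, hzN⟩
    obtain ⟨W, hW⟩ := hwN
    exact absurd (hwU W) (not_lt.2 hW.le)
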